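/- Let H be a real Hilbert space, μ, β ∈ (0,∞) and θ ∈ (0,2). Let J_A : H → H be a C_β-resolvent and J_B : H → H be an M_μ-resolvent (the roles of the two operator classes are swapped), and let T z = z − θ·J_A z + θ·J_B(2·J_A z − z). Then ‖T z − T z'‖ ≤ ρ(μ,β,θ)·‖z − z'‖ for all z, z' ∈ H, where ρ(μ,β,θ) is the same five-case contraction factor as for the Douglas–Rachford operator built from an M_μ-resolvent and a C_β-resolvent, defined in the context. -/

import Mathlib

open RealInnerProductSpace
open scoped Classical

/-- The tight five-case contraction factor for Douglas–Rachford splitting with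
`A` maximal `μ`-strongly monotone and `B` `β`-cocoercive (stepsize `1`, relaxation `θ`). -/
noncomputable def rhoDRS (μ β θ : ℝ) : ℝ :=
  if μ * β - μ + β < 0 ∧
      θ ≤ 2 * (β + 1) * (μ - β - μ * β) / (μ + μ * β - β - β ^ 2 - 2 * μ * β ^ 2) then
    |1 - θ * β / (β + 1)|
  else if μ * β - μ - β > 0 ∧
      θ ≤ 2 * (μ ^ 2 + β ^ 2 + μ * β + μ + β - μ ^ 2 * β ^ 2) /
        (μ ^ 2 + β ^ 2 + μ ^ 2 * β + μ * β ^ 2 + μ + β - 2 * μ ^ 2 * β ^ 2) then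
    |1 - θ * (1 + μ * β) / ((μ + 1) * (β + 1))|
  else if θ ≥ 2 * (μ * β + μ + β) / (2 * μ * β + μ + β) then
    |1 - θ|
  else if μ * β + μ - β < 0 ∧
      θ ≤ 2 * (μ + 1) * (β - μ - μ * β) / (β + μ * β - μ - μ ^ 2 - 2 * μ ^ 2 * β) then
    |1 - θ * μ / (μ + 1)|
  else
    Real.sqrt (2 - θ) / 2 *
      Real.sqrt ((((2 - θ) * μ * (β + 1) + θ * β * (1 - μ)) *
          ((2 - θ) * β * (μ + 1) + θ * μ * (1 - β))) /
        (μ * β * (2 * μ * β * (1 - θ) + (2 - θ) * (μ + β + 1))))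

/-- `J` is the resolvent of a maximal `μ`-strongly monotone operator. -/
def IsMResolvent {H : Type*} [NormedAddCommGroup H] [InnerProductSpace ℝ H]
    (μ : ℝ) (J : H → H) : Prop :=
  ∀ x y : H, ⟪J x - J y, x - y⟫ ≥ (1 + μ) * ‖J x - J y‖ ^ 2

/-- `J` is the resolvent of a `β`-cocoercive operator. -/
def IsCResolvent {H : Type*} [NormedAddCommGroup H] [InnerProductSpace ℝ H]
    (β : ℝ) (J : H → H) : Prop :=
  ∀ x y : H, ⟪(x - J x) - (y - J y), J x - J y⟫ ≥ β * ‖(x - J x) - (y - J y)‖ ^ 2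

private lemma norm_smul_add_smul_sq {H : Type*} [NormedAddCommGroup H]
    [InnerProductSpace ℝ H] (s t : ℝ) (x y : H) :
    ‖s • x + t • y‖ ^ 2 = s ^ 2 * ‖x‖ ^ 2 + 2 * s * t * ⟪x, y⟫ + t ^ 2 * ‖y‖ ^ 2 := by
  rw [@norm_add_sq_real]
  simp only [norm_smul, Real.norm_eq_abs, real_inner_smul_left, real_inner_smul_right,
    mul_pow, sq_abs]
  ring

private lemma aux_pos {a b : ℝ} (h : 0 < a * b) (hb : 0 < b) : 0 < a := by
  by_contra h'
  push_neg at h'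
  nlinarith [mul_nonneg (neg_nonneg.mpr h') hb.le]

private lemma sum_sqrt_le {P Q s1 s2 R W θ : ℝ} (hP : 0 ≤ P) (hQ : 0 ≤ Q)
    (hs1 : 0 < s1) (hs2 : 0 < s2) (hW : 0 < W) (hθ : 0 ≤ θ)
    (hpoly : s2 * (P + s1 ^ 2 * W ^ 2) + θ * s1 * (Q + s2 ^ 2 * W ^ 2)
      ≤ 2 * s1 * s2 * R * W ^ 2) :
    Real.sqrt P + θ * Real.sqrt Q ≤ R * W := by
  have e1 : 2 * (s1 * W) * Real.sqrt P ≤ P + s1 ^ 2 * W ^ 2 := by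
    linarith [sq_nonneg (Real.sqrt P - s1 * W), Real.sq_sqrt hP]
  have e2 : 2 * (s2 * W) * Real.sqrt Q ≤ Q + s2 ^ 2 * W ^ 2 := by
    linarith [sq_nonneg (Real.sqrt Q - s2 * W), Real.sq_sqrt hQ]
  have f1 := mul_le_mul_of_nonneg_left e1 hs2.le
  have f2 := mul_le_mul_of_nonneg_left e2 (mul_nonneg hθ hs1.le)
  have key : (2 * s1 * s2 * W) * (Real.sqrt P + θ * Real.sqrt Q)
      ≤ (2 * s1 * s2 * W) * (R * W) := by nlinarith [f1, f2, hpoly]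
  exact le_of_mul_le_mul_left key (by positivity)

set_option maxHeartbeats 4000000 in
/-- Self-duality of DRS: with the roles of the two operator classes swapped
(`A ∈ C_β`, `B ∈ M_μ`), the Douglas–Rachford operator has the same tight contraction
factor `rhoDRS μ β θ`. -/
theorem DRS_contraction_coco_strmonotone_swapped
    {H : Type*} [NormedAddCommGroup H] [InnerProductSpace ℝ H] [CompleteSpace H]
    {μ β θ : ℝ} (hμ : 0 < μ) (hβ : 0 < β) (hθ₀ : 0 < θ) (hθ₂ : θ < 2)
    (JA JB : H → H) (hJA : IsCResolvent β JA) (hJB : IsMResolvent μ JB)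
    (T : H → H) (hT : ∀ z, T z = z - θ • JA z + θ • JB ((2 : ℝ) • JA z - z)) :
    ∀ z z' : H, ‖T z - T z'‖ ≤ rhoDRS μ β θ * ‖z - z'‖ := by
  intro z z'
  rcases eq_or_ne z z' with rfl | hne
  · simp
  have Dpos : (0:ℝ) < 2 * (1 + β) * (1 + μ) := by nlinarith [mul_pos hβ hμ]
  set w : H := z - z' with hw
  have hWpos : (0:ℝ) < ‖w‖ := by rw [hw]; exact norm_sub_pos_iff.mpr hne
  set a : H := JA z - JA z' with had
  set bv : H := JB ((2 : ℝ) • JA z - z) - JB ((2 : ℝ) • JA z' - z') with hbd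
  set r : H := ((2 : ℝ) • JA z - z) - ((2 : ℝ) • JA z' - z') with hrd
  set n1 : H := (2 * (1 + β)) • a + (-(1 + 2 * β)) • w with hn1d
  set n2 : H := (2 * (1 + μ)) • bv + (-1 : ℝ) • r with hn2d
  set A' : ℝ := 2 * (1 + β) * (1 + μ) - θ * (1 + μ + β + 2 * β * μ) with hA'd
  set G' : ℝ := -(θ * μ) with hG'd
  set P : ℝ := A' ^ 2 * ‖w‖ ^ 2 + G' ^ 2 * ‖w‖ ^ 2 + 2 * A' * G' * ⟪w, n1⟫ with hPd
  set Q : ℝ := (β ^ 2 + 1) * ‖w‖ ^ 2 + 2 * β * ⟪w, n1⟫ with hQd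
  clear_value w a bv r n1 n2 A' G' P Q
  -- resolvent inequalities
  have hA : β * ‖w - a‖ ^ 2 ≤ ⟪w - a, a⟫ := by
    have h := hJA z z'
    have e : z - JA z - (z' - JA z') = w - a := by rw [hw, had]; abel
    rw [e, ← had] at h
    exact h
  have hB : (1 + μ) * ‖bv‖ ^ 2 ≤ ⟪bv, r⟫ := by
    have h := hJB ((2 : ℝ) • JA z - z) ((2 : ℝ) • JA z' - z')
    rw [← hbd, ← hrd] at h
    exact h
  have eiA : ⟪w - a, a⟫ = ⟪w, a⟫ - ‖a‖ ^ 2 := by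
    rw [inner_sub_left, real_inner_self_eq_norm_sq]
  have enA : ‖w - a‖ ^ 2 = ‖w‖ ^ 2 - 2 * ⟪w, a⟫ + ‖a‖ ^ 2 := norm_sub_sq_real w a
  rw [eiA, enA] at hA
  -- squared norm facts
  have h1sq : ‖n1‖ ^ 2 ≤ ‖w‖ ^ 2 := by
    have en : ‖n1‖ ^ 2 = (2 * (1 + β)) ^ 2 * ‖a‖ ^ 2
        - (2 * (2 * (1 + β)) * (1 + 2 * β)) * ⟪w, a⟫ + (1 + 2 * β) ^ 2 * ‖w‖ ^ 2 := by
      rw [hn1d, norm_smul_add_smul_sq, real_inner_comm a w]; ring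
    have key : 0 ≤ (1 + β) * ((⟪w, a⟫ - ‖a‖ ^ 2)
        - β * (‖w‖ ^ 2 - 2 * ⟪w, a⟫ + ‖a‖ ^ 2)) :=
      mul_nonneg (by linarith) (by linarith)
    linarith [key, en.le, en.ge]
  have h2sq : ‖n2‖ ^ 2 ≤ ‖r‖ ^ 2 := by
    have en : ‖n2‖ ^ 2 = (2 * (1 + μ)) ^ 2 * ‖bv‖ ^ 2
        - (2 * (2 * (1 + μ))) * ⟪bv, r⟫ + ‖r‖ ^ 2 := by
      rw [hn2d, norm_smul_add_smul_sq]; ring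
    have key : 0 ≤ 4 * (1 + μ) * (⟪bv, r⟫ - (1 + μ) * ‖bv‖ ^ 2) :=
      mul_nonneg (by linarith) (by linarith)
    linarith [key, en.le, en.ge]
  have hn1W : ‖n1‖ ≤ ‖w‖ := by
    calc ‖n1‖ = Real.sqrt (‖n1‖ ^ 2) := (Real.sqrt_sq (norm_nonneg _)).symm
      _ ≤ Real.sqrt (‖w‖ ^ 2) := Real.sqrt_le_sqrt h1sq
      _ = ‖w‖ := Real.sqrt_sq (norm_nonneg _)
  have hn2r : ‖n2‖ ≤ ‖r‖ := by
    calc ‖n2‖ = Real.sqrt (‖n2‖ ^ 2) := (Real.sqrt_sq (norm_nonneg _)).symm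
      _ ≤ Real.sqrt (‖r‖ ^ 2) := Real.sqrt_le_sqrt h2sq
      _ = ‖r‖ := Real.sqrt_sq (norm_nonneg _)
  have hbw : β • w + n1 = (1 + β) • r := by
    rw [hn1d, hrd, had, hw]; module
  have hn2norm : (1 + β) * ‖n2‖ ≤ ‖β • w + n1‖ := by
    have e : ‖β • w + n1‖ = (1 + β) * ‖r‖ := by
      rw [hbw, norm_smul, Real.norm_eq_abs, abs_of_pos (by linarith)]
    rw [e]
    exact mul_le_mul_of_nonneg_left hn2r (by linarith)
  -- inner product bounds
  have hic := abs_real_inner_le_norm w n1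
  have hchi : ⟪w, n1⟫ ≤ ‖w‖ ^ 2 := by
    nlinarith [le_abs_self ⟪w, n1⟫, hic, mul_le_mul_of_nonneg_left hn1W (norm_nonneg w)]
  have hclo : -(‖w‖ ^ 2) ≤ ⟪w, n1⟫ := by
    nlinarith [neg_abs_le ⟪w, n1⟫, hic, mul_le_mul_of_nonneg_left hn1W (norm_nonneg w)]
  have hcpu : 0 ≤ ⟪w, n1⟫ + ‖w‖ ^ 2 := by linarith
  have hcmu : 0 ≤ ‖w‖ ^ 2 - ⟪w, n1⟫ := by linarith
  have hP0 : 0 ≤ P := by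
    rw [hPd]
    linarith [mul_nonneg (sq_nonneg (A' + G')) hcpu, mul_nonneg (sq_nonneg (A' - G')) hcmu]
  have hQ0 : 0 ≤ Q := by
    rw [hQd]
    linarith [mul_nonneg (sq_nonneg (β - 1)) (sq_nonneg ‖w‖),
      mul_nonneg (by linarith : (0:ℝ) ≤ 2 * β) hcpu]
  -- the key vector identity
  have hTsmul : (2 * (1 + β) * (1 + μ)) • (T z - T z')
      = A' • w + G' • n1 + (θ * (1 + β)) • n2 := by
    rw [hT z, hT z', hA'd, hG'd, hn2d, hn1d, hrd, hbd, had, hw]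
    module
  -- main bound
  have hn1P : ‖A' • w + G' • n1‖ ≤ Real.sqrt P := by
    have hsq' : ‖A' • w + G' • n1‖ ^ 2 ≤ P := by
      rw [norm_smul_add_smul_sq, hPd]
      linarith [mul_nonneg (sq_nonneg G') (sub_nonneg.mpr h1sq)]
    calc ‖A' • w + G' • n1‖ = Real.sqrt (‖A' • w + G' • n1‖ ^ 2) :=
          (Real.sqrt_sq (norm_nonneg _)).symm
      _ ≤ Real.sqrt P := Real.sqrt_le_sqrt hsq'
  have hn2Q : ‖β • w + n1‖ ≤ Real.sqrt Q := by
    have hsq' : ‖β • w + n1‖ ^ 2 ≤ Q := by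
      rw [show β • w + n1 = β • w + (1:ℝ) • n1 by rw [one_smul],
        norm_smul_add_smul_sq, hQd]
      linarith [h1sq]
    calc ‖β • w + n1‖ = Real.sqrt (‖β • w + n1‖ ^ 2) := (Real.sqrt_sq (norm_nonneg _)).symm
      _ ≤ Real.sqrt Q := Real.sqrt_le_sqrt hsq'
  have hmain : (2 * (1 + β) * (1 + μ)) * ‖T z - T z'‖ ≤ Real.sqrt P + θ * Real.sqrt Q := by
    have h0 : (2 * (1 + β) * (1 + μ)) * ‖T z - T z'‖
        = ‖(2 * (1 + β) * (1 + μ)) • (T z - T z')‖ := by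
      rw [norm_smul, Real.norm_eq_abs, abs_of_pos Dpos]
    rw [h0, hTsmul]
    calc ‖A' • w + G' • n1 + (θ * (1 + β)) • n2‖
        ≤ ‖A' • w + G' • n1‖ + ‖(θ * (1 + β)) • n2‖ := norm_add_le _ _
      _ = ‖A' • w + G' • n1‖ + θ * ((1 + β) * ‖n2‖) := by
          rw [norm_smul, Real.norm_eq_abs,
            abs_of_nonneg (by nlinarith : (0:ℝ) ≤ θ * (1 + β))]
          ring
      _ ≤ Real.sqrt P + θ * ‖β • w + n1‖ := by
          gcongr
      _ ≤ Real.sqrt P + θ * Real.sqrt Q := by gcongr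
  suffices hgoal : Real.sqrt P + θ * Real.sqrt Q
      ≤ (2 * (1 + β) * (1 + μ)) * (rhoDRS μ β θ * ‖w‖) by
    exact le_of_mul_le_mul_left (hmain.trans hgoal) Dpos
  clear hmain hTsmul hn1P hn2Q hic hbw hn2norm hn1W hn2r h1sq h2sq hA hB eiA enA hchi hclo
  clear hn2d hn1d hrd hbd had hw hne hT hJA hJB
  clear n2 r bv a T JA JB z z'
  simp only [rhoDRS]
  split_ifs with hc1 hc2 hc3 hc4
  · -- Case 1 : ρ = |1 - θβ/(β+1)|
    obtain ⟨h1a, h1b⟩ := hc1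
    have hβ1 : β < 1 := by nlinarith
    have hd1 : 0 < μ + μ * β - β - β ^ 2 - 2 * μ * β ^ 2 := by
      linarith [mul_pos (show (0:ℝ) < 1 + β by linarith)
          (show (0:ℝ) < μ - β - μ * β by linarith),
        mul_pos (mul_pos hμ hβ) (sub_pos.mpr hβ1)]
    have hθd : θ * (μ + μ * β - β - β ^ 2 - 2 * μ * β ^ 2)
        ≤ 2 * (β + 1) * (μ - β - μ * β) := (le_div_iff₀ hd1).mp h1b
    have hs1 : 0 < 2 * (1 + β) * (1 + μ) - θ * (1 + β + 2 * β * μ) := by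
      linarith [mul_pos hμ (sub_pos.mpr hβ1),
        mul_lt_mul_of_pos_right hθ₂ (show (0:ℝ) < 1 + β + 2 * β * μ by nlinarith [mul_pos hβ hμ])]
    have hq : (2 * (1 + β) * (1 + μ) - θ * (1 + μ + β + 2 * β * μ)) * (-(θ * μ)) * (1 - β)
        + θ * β * (2 * (1 + β) * (1 + μ) - θ * (1 + β + 2 * β * μ)) ≤ 0 := by
      linarith [mul_nonneg (mul_nonneg hθ₀.le (show (0:ℝ) ≤ 1 + μ by linarith))
        (sub_nonneg.mpr hθd)]
    have hprod : ((2 * (1 + β) * (1 + μ) - θ * (1 + μ + β + 2 * β * μ)) * (-(θ * μ)) * (1 - β)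
        + θ * β * (2 * (1 + β) * (1 + μ) - θ * (1 + β + 2 * β * μ)))
        * (⟪w, n1⟫ + ‖w‖ ^ 2) ≤ 0 :=
      mul_nonpos_of_nonpos_of_nonneg hq hcpu
    have habs : 2 * (1 + β) * (1 + μ) * (|1 - θ * β / (β + 1)| * ‖w‖)
        = (2 * (1 + μ) * (1 + β - θ * β)) * ‖w‖ := by
      rw [abs_of_nonneg (by
        rw [sub_nonneg, div_le_one (by linarith)]
        nlinarith)]
      field_simp
      ring
    rw [habs]
    refine sum_sqrt_le hP0 hQ0 hs1 (show (0:ℝ) < 1 - β by linarith) hWpos hθ₀.le ?_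
    rw [hPd, hQd, hA'd, hG'd]
    linarith [hprod]
  · -- Case 2 : ρ = |1 - θ(1+μβ)/((μ+1)(β+1))|
    obtain ⟨h2a, h2b⟩ := hc2
    have hμ1 : 1 < μ := by nlinarith
    have hβ1 : 1 < β := by nlinarith
    have hn2' : μ ^ 2 + β ^ 2 + μ * β + μ + β - μ ^ 2 * β ^ 2 < 0 := by
      linarith [mul_pos (mul_pos (show (0:ℝ) < 1 + μ by linarith)
        (show (0:ℝ) < 1 + β by linarith)) (show (0:ℝ) < μ * β - μ - β by linarith)]
    have hd2 : μ ^ 2 + β ^ 2 + μ ^ 2 * β + μ * β ^ 2 + μ + β - 2 * μ ^ 2 * β ^ 2 < 0 := by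
      linarith [hn2', mul_pos (mul_pos (mul_pos hμ hβ) (sub_pos.mpr hμ1)) (sub_pos.mpr hβ1)]
    have hθd : 2 * (μ ^ 2 + β ^ 2 + μ * β + μ + β - μ ^ 2 * β ^ 2)
        ≤ θ * (μ ^ 2 + β ^ 2 + μ ^ 2 * β + μ * β ^ 2 + μ + β - 2 * μ ^ 2 * β ^ 2) :=
      (le_div_iff_of_neg hd2).mp h2b
    have hq : (2 * (1 + β) * (1 + μ) - θ * (1 + μ + β + 2 * β * μ)) * (-(θ * μ)) * (β - 1)
        + θ * β * (2 * (1 + β) * (1 + μ) - θ * (1 + β + 2 * β * μ)) ≤ 0 := by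
      linarith [mul_nonpos_of_nonneg_of_nonpos hθ₀.le (by linarith :
        2 * (μ ^ 2 + β ^ 2 + μ * β + μ + β - μ ^ 2 * β ^ 2)
          - θ * (μ ^ 2 + β ^ 2 + μ ^ 2 * β + μ * β ^ 2 + μ + β - 2 * μ ^ 2 * β ^ 2) ≤ 0)]
    have hprod : ((2 * (1 + β) * (1 + μ) - θ * (1 + μ + β + 2 * β * μ)) * (-(θ * μ)) * (β - 1)
        + θ * β * (2 * (1 + β) * (1 + μ) - θ * (1 + β + 2 * β * μ)))
        * (⟪w, n1⟫ + ‖w‖ ^ 2) ≤ 0 :=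
      mul_nonpos_of_nonpos_of_nonneg hq hcpu
    have hs1 : 0 < 2 * (1 + β) * (1 + μ) - θ * (1 + β + 2 * β * μ) := by
      have base : μ * (β - 1) * (μ * β - μ - β) < μ * (β - 1) * (β * (μ - 1)) :=
        mul_lt_mul_of_pos_left (by nlinarith) (mul_pos hμ (sub_pos.mpr hβ1))
      have key2 : (1 + β + 2 * β * μ)
            * (-(2 * (μ ^ 2 + β ^ 2 + μ * β + μ + β - μ ^ 2 * β ^ 2)))
          < (2 * (1 + β) * (1 + μ))
            * (-(μ ^ 2 + β ^ 2 + μ ^ 2 * β + μ * β ^ 2 + μ + β - 2 * μ ^ 2 * β ^ 2)) := by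
        linarith [mul_pos (mul_pos (show (0:ℝ) < 1 + μ by linarith)
          (show (0:ℝ) < 1 + β by linarith)) (sub_pos.mpr base)]
      have key1 : θ * (1 + β + 2 * β * μ)
            * (-(μ ^ 2 + β ^ 2 + μ ^ 2 * β + μ * β ^ 2 + μ + β - 2 * μ ^ 2 * β ^ 2))
          ≤ (1 + β + 2 * β * μ)
            * (-(2 * (μ ^ 2 + β ^ 2 + μ * β + μ + β - μ ^ 2 * β ^ 2))) := by
        linarith [mul_le_mul_of_nonneg_left hθd
          (show (0:ℝ) ≤ 1 + β + 2 * β * μ by nlinarith [mul_pos hβ hμ])]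
      have hfin : θ * (1 + β + 2 * β * μ)
            * (-(μ ^ 2 + β ^ 2 + μ ^ 2 * β + μ * β ^ 2 + μ + β - 2 * μ ^ 2 * β ^ 2))
          < (2 * (1 + β) * (1 + μ))
            * (-(μ ^ 2 + β ^ 2 + μ ^ 2 * β + μ * β ^ 2 + μ + β - 2 * μ ^ 2 * β ^ 2)) := by
        linarith
      have := lt_of_mul_lt_mul_right hfin (by linarith :
        (0:ℝ) ≤ -(μ ^ 2 + β ^ 2 + μ ^ 2 * β + μ * β ^ 2 + μ + β - 2 * μ ^ 2 * β ^ 2))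
      linarith
    have habs : 2 * (1 + β) * (1 + μ) * (|1 - θ * (1 + μ * β) / ((μ + 1) * (β + 1))| * ‖w‖)
        = (2 * (1 + β) * (1 + μ) - 2 * θ * (1 + μ * β)) * ‖w‖ := by
      rw [abs_of_nonneg (by
        rw [sub_nonneg, div_le_one (mul_pos (by linarith) (by linarith))]
        nlinarith [hs1, mul_pos hμ hβ])]
      field_simp
      ring
    rw [habs]
    refine sum_sqrt_le hP0 hQ0 hs1 (show (0:ℝ) < β - 1 by linarith) hWpos hθ₀.le ?_
    rw [hPd, hQd, hA'd, hG'd]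
    linarith [hprod]
  · -- Case 3 : ρ = |1 - θ|
    have hZ : (0:ℝ) < 2 * μ * β + μ + β := by nlinarith [mul_pos hμ hβ]
    have hθZ : 2 * (μ * β + μ + β) ≤ θ * (2 * μ * β + μ + β) := (div_le_iff₀ hZ).mp hc3
    have hθ1 : 1 < θ := by nlinarith
    have hkey : 0 < θ * (1 + 2 * μ) - 2 * (1 + μ) := by
      have h' := mul_le_mul_of_nonneg_right hθZ (show (0:ℝ) ≤ 1 + 2 * μ by linarith)
      by_contra hcon
      push_neg at hcon
      linarith [h', mul_le_mul_of_nonneg_right hcon hZ.le, mul_pos hμ hμ]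
    have hs1 : 0 < θ * (1 + 2 * μ) * (1 + β) - 2 * (1 + β) * (1 + μ) := by
      linarith [mul_pos (show (0:ℝ) < 1 + β by linarith) hkey]
    have hq : 0 ≤ (2 * (1 + β) * (1 + μ) - θ * (1 + μ + β + 2 * β * μ)) * (-(θ * μ)) * (β + 1)
        + θ * β * (θ * (1 + 2 * μ) * (1 + β) - 2 * (1 + β) * (1 + μ)) := by
      linarith [mul_nonneg (mul_nonneg hθ₀.le (mul_nonneg
        (show (0:ℝ) ≤ 1 + μ by linarith) (show (0:ℝ) ≤ 1 + β by linarith)))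
        (sub_nonneg.mpr hθZ)]
    have hprod : 0 ≤ ((2 * (1 + β) * (1 + μ) - θ * (1 + μ + β + 2 * β * μ)) * (-(θ * μ)) * (β + 1)
        + θ * β * (θ * (1 + 2 * μ) * (1 + β) - 2 * (1 + β) * (1 + μ)))
        * (‖w‖ ^ 2 - ⟪w, n1⟫) := mul_nonneg hq hcmu
    have habs : 2 * (1 + β) * (1 + μ) * (|1 - θ| * ‖w‖)
        = (2 * (1 + β) * (1 + μ) * (θ - 1)) * ‖w‖ := by
      rw [show |1 - θ| = θ - 1 by rw [abs_of_nonpos (by linarith)]; ring]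
      ring
    rw [habs]
    refine sum_sqrt_le hP0 hQ0 hs1 (show (0:ℝ) < β + 1 by linarith) hWpos hθ₀.le ?_
    rw [hPd, hQd, hA'd, hG'd]
    linarith [hprod]
  · -- Case 4 : ρ = |1 - θμ/(μ+1)|
    obtain ⟨h4a, h4b⟩ := hc4
    have hμ1 : μ < 1 := by nlinarith
    have ht : 0 < β - μ - μ * β := by linarith
    have hd4 : 0 < β + μ * β - μ - μ ^ 2 - 2 * μ ^ 2 * β := by
      linarith [mul_pos (show (0:ℝ) < 1 + μ by linarith) ht,
        mul_pos (mul_pos hμ hβ) (sub_pos.mpr hμ1)]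
    have hθd : θ * (β + μ * β - μ - μ ^ 2 - 2 * μ ^ 2 * β)
        ≤ 2 * (μ + 1) * (β - μ - μ * β) := (le_div_iff₀ hd4).mp h4b
    have hkey : θ * (1 + 2 * μ) < 2 * (1 + μ) := by
      have h' := mul_le_mul_of_nonneg_left hθd (show (0:ℝ) ≤ 1 + 2 * μ by linarith)
      by_contra hcon
      push_neg at hcon
      linarith [h', mul_le_mul_of_nonneg_right hcon hd4.le,
        mul_pos (mul_pos hμ hμ) (show (0:ℝ) < 1 + μ by linarith)]
    have hs1 : 0 < 2 * (1 + β) * (1 + μ) - θ * (1 + 2 * μ) * (1 + β) := by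
      linarith [mul_pos (show (0:ℝ) < 1 + β by linarith) (sub_pos.mpr hkey)]
    have hq : 0 ≤ (2 * (1 + β) * (1 + μ) - θ * (1 + μ + β + 2 * β * μ)) * (-(θ * μ)) * (β + 1)
        + θ * β * (2 * (1 + β) * (1 + μ) - θ * (1 + 2 * μ) * (1 + β)) := by
      linarith [mul_nonneg (mul_nonneg hθ₀.le (show (0:ℝ) ≤ 1 + β by linarith))
        (sub_nonneg.mpr hθd)]
    have hprod : 0 ≤ ((2 * (1 + β) * (1 + μ) - θ * (1 + μ + β + 2 * β * μ)) * (-(θ * μ)) * (β + 1)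
        + θ * β * (2 * (1 + β) * (1 + μ) - θ * (1 + 2 * μ) * (1 + β)))
        * (‖w‖ ^ 2 - ⟪w, n1⟫) := mul_nonneg hq hcmu
    have habs : 2 * (1 + β) * (1 + μ) * (|1 - θ * μ / (μ + 1)| * ‖w‖)
        = (2 * (1 + β) * (1 + μ - θ * μ)) * ‖w‖ := by
      rw [abs_of_nonneg (by
        rw [sub_nonneg, div_le_one (by linarith)]
        nlinarith)]
      field_simp
      ring
    rw [habs]
    refine sum_sqrt_le hP0 hQ0 hs1 (show (0:ℝ) < β + 1 by linarith) hWpos hθ₀.le ?_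
    rw [hPd, hQd, hA'd, hG'd]
    linarith [hprod]
  · -- Case 5 : generic rate
    set XX : ℝ := (((2 - θ) * μ * (β + 1) + θ * β * (1 - μ)) *
          ((2 - θ) * β * (μ + 1) + θ * μ * (1 - β))) /
        (μ * β * (2 * μ * β * (1 - θ) + (2 - θ) * (μ + β + 1))) with hXX
    have hZ : (0:ℝ) < 2 * μ * β + μ + β := by nlinarith [mul_pos hμ hβ]
    have hθZ : θ * (2 * μ * β + μ + β) < 2 * (μ * β + μ + β) :=
      (lt_div_iff₀ hZ).mp (not_le.mp hc3)
    have hAp : 0 < A' := by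
      rw [hA'd]
      have h2 : 0 < (2 * (1 + β) * (1 + μ) - θ * (1 + μ + β + 2 * β * μ))
          * (2 * μ * β + μ + β) := by
        linarith [mul_lt_mul_of_pos_right hθZ
          (show (0:ℝ) < 1 + μ + β + 2 * β * μ by nlinarith [mul_pos hβ hμ]),
          mul_pos hμ hβ]
      exact aux_pos h2 hZ
    have hE : 0 < 2 * μ * β * (1 - θ) + (2 - θ) * (μ + β + 1) := by
      have h2 : 0 < (2 * μ * β * (1 - θ) + (2 - θ) * (μ + β + 1)) * (2 * μ * β + μ + β) := by
        linarith [mul_lt_mul_of_pos_right hθZ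
          (show (0:ℝ) < 2 * μ * β + μ + β + 1 by linarith), mul_pos hμ hβ]
      exact aux_pos h2 hZ
    have hF1 : 0 ≤ (2 - θ) * μ * (β + 1) + θ * β * (1 - μ) := by
      rcases le_or_gt (2 * μ * β + μ - β) 0 with h | h
      · linarith [mul_nonpos_of_nonneg_of_nonpos hθ₀.le h, mul_pos hμ hβ]
      · have h2 : 0 < ((2 - θ) * μ * (β + 1) + θ * β * (1 - μ)) * (2 * μ * β + μ + β) := by
          linarith [mul_lt_mul_of_pos_right hθZ h, mul_pos hβ (add_pos hμ hβ)]
        exact (aux_pos h2 hZ).le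
    have hF2 : 0 ≤ (2 - θ) * β * (μ + 1) + θ * μ * (1 - β) := by
      rcases le_or_gt (2 * μ * β + β - μ) 0 with h | h
      · linarith [mul_nonpos_of_nonneg_of_nonpos hθ₀.le h, mul_pos hμ hβ]
      · have h2 : 0 < ((2 - θ) * β * (μ + 1) + θ * μ * (1 - β)) * (2 * μ * β + μ + β) := by
          linarith [mul_lt_mul_of_pos_right hθZ h, mul_pos hμ (add_pos hμ hβ)]
        exact (aux_pos h2 hZ).le
    have hDEN : 0 < μ * β * (2 * μ * β * (1 - θ) + (2 - θ) * (μ + β + 1)) :=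
      mul_pos (mul_pos hμ hβ) hE
    have hXnn : 0 ≤ XX := by
      rw [hXX]; exact div_nonneg (mul_nonneg hF1 hF2) hDEN.le
    clear_value XX
    -- AM–GM certificate
    have hg : 2 * θ * ((θ * β) * (A' * μ)) * (Real.sqrt P * Real.sqrt Q)
        ≤ (θ * β) ^ 2 * Real.sqrt P ^ 2 + (A' * μ) ^ 2 * θ ^ 2 * Real.sqrt Q ^ 2 := by
      linarith [sq_nonneg ((θ * β) * Real.sqrt P - (A' * μ) * θ * Real.sqrt Q)]
    have hsq : (θ * β) * (A' * μ) * (Real.sqrt P + θ * Real.sqrt Q) ^ 2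
        ≤ (θ * β + A' * μ) * ((θ * β) * P + (A' * μ) * θ ^ 2 * Q) := by
      have e1 : Real.sqrt P ^ 2 = P := Real.sq_sqrt hP0
      have e2 : Real.sqrt Q ^ 2 = Q := Real.sq_sqrt hQ0
      have hsq' : (θ * β) * (A' * μ) * (Real.sqrt P + θ * Real.sqrt Q) ^ 2
          ≤ (θ * β + A' * μ) * ((θ * β) * Real.sqrt P ^ 2
            + (A' * μ) * θ ^ 2 * Real.sqrt Q ^ 2) := by linarith [hg]
      rw [e1, e2] at hsq'
      exact hsq'
    have hKu : (θ * β) * P + (A' * μ) * θ ^ 2 * Q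
        = ((θ * β) * (A' ^ 2 + G' ^ 2) + (A' * μ) * θ ^ 2 * (β ^ 2 + 1)) * ‖w‖ ^ 2 := by
      rw [hPd, hQd, hG'd]; ring
    have hκν : 0 < (θ * β) * (A' * μ) := mul_pos (mul_pos hθ₀ hβ) (mul_pos hAp hμ)
    have hEq' : (θ * β + A' * μ) * ((θ * β) * (A' ^ 2 + G' ^ 2) + (A' * μ) * θ ^ 2 * (β ^ 2 + 1))
        = (θ * β) * (A' * μ) * ((2 * (1 + β) * (1 + μ)) ^ 2 * ((2 - θ) * XX) / 4) := by
      rw [hXX, hA'd, hG'd]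
      rw [div_eq_mul_inv _ (μ * β * (2 * μ * β * (1 - θ) + (2 - θ) * (μ + β + 1)))]
      have hinv := mul_inv_cancel₀ (mul_pos (mul_pos hμ hβ) hE).ne'
      generalize (μ * β * (2 * μ * β * (1 - θ) + (2 - θ) * (μ + β + 1)))⁻¹ = I at hinv ⊢
      set_option maxRecDepth 100000 in
      linear_combination (-((θ * β + (2 * (1 + β) * (1 + μ) - θ * (1 + μ + β + 2 * β * μ)) * μ) * ((θ * β) * ((2 * (1 + β) * (1 + μ) - θ * (1 + μ + β + 2 * β * μ)) ^ 2 + (-(θ * μ)) ^ 2) + ((2 * (1 + β) * (1 + μ) - θ * (1 + μ + β + 2 * β * μ)) * μ) * θ ^ 2 * (β ^ 2 + 1)))) * hinv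
    have h1 : Real.sqrt (2 - θ) ^ 2 = 2 - θ := Real.sq_sqrt (by linarith)
    have h2 : Real.sqrt XX ^ 2 = XX := Real.sq_sqrt hXnn
    have hR2 : (2 * (1 + β) * (1 + μ) * (Real.sqrt (2 - θ) / 2 * Real.sqrt XX * ‖w‖)) ^ 2
        = (2 * (1 + β) * (1 + μ)) ^ 2 * ((2 - θ) * XX) / 4 * ‖w‖ ^ 2 := by
      linear_combination ((2 * (1 + β) * (1 + μ)) ^ 2 * ‖w‖ ^ 2 / 4 * Real.sqrt XX ^ 2) * h1
        + ((2 * (1 + β) * (1 + μ)) ^ 2 * ‖w‖ ^ 2 * (2 - θ) / 4) * h2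
    have h3 : (θ * β) * (A' * μ) * ((Real.sqrt P + θ * Real.sqrt Q) ^ 2)
        ≤ (θ * β) * (A' * μ)
          * ((2 * (1 + β) * (1 + μ)) ^ 2 * ((2 - θ) * XX) / 4 * ‖w‖ ^ 2) := by
      calc (θ * β) * (A' * μ) * ((Real.sqrt P + θ * Real.sqrt Q) ^ 2)
          ≤ (θ * β + A' * μ) * ((θ * β) * P + (A' * μ) * θ ^ 2 * Q) := hsq
        _ = ((θ * β + A' * μ) * ((θ * β) * (A' ^ 2 + G' ^ 2)
            + (A' * μ) * θ ^ 2 * (β ^ 2 + 1))) * ‖w‖ ^ 2 := by rw [hKu]; ring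
        _ = (θ * β) * (A' * μ)
            * ((2 * (1 + β) * (1 + μ)) ^ 2 * ((2 - θ) * XX) / 4 * ‖w‖ ^ 2) := by
            rw [hEq']; ring
    have hS2 : (Real.sqrt P + θ * Real.sqrt Q) ^ 2
        ≤ (2 * (1 + β) * (1 + μ) * (Real.sqrt (2 - θ) / 2 * Real.sqrt XX * ‖w‖)) ^ 2 := by
      rw [hR2]
      exact le_of_mul_le_mul_left h3 hκν
    have hSnn : 0 ≤ Real.sqrt P + θ * Real.sqrt Q := by positivity
    have hRnn : 0 ≤ 2 * (1 + β) * (1 + μ) * (Real.sqrt (2 - θ) / 2 * Real.sqrt XX * ‖w‖) :=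
      mul_nonneg Dpos.le (mul_nonneg (mul_nonneg (by positivity) (Real.sqrt_nonneg _))
        (norm_nonneg _))
    calc Real.sqrt P + θ * Real.sqrt Q
        = Real.sqrt ((Real.sqrt P + θ * Real.sqrt Q) ^ 2) := (Real.sqrt_sq hSnn).symm
      _ ≤ Real.sqrt ((2 * (1 + β) * (1 + μ)
          * (Real.sqrt (2 - θ) / 2 * Real.sqrt XX * ‖w‖)) ^ 2) := Real.sqrt_le_sqrt hS2
      _ = 2 * (1 + β) * (1 + μ) * (Real.sqrt (2 - θ) / 2 * Real.sqrt XX * ‖w‖) :=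
          Real.sqrt_sq hRnn
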